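/- Fix a prime p, an integer e ≥ 1 dividing p − 1, and an integer n_v ≥ 1 such that p − 1 divides e·n_v. Set n_w := e·n_v, ♮ := p·n_w/(p−1), and c := n_w/(p−1). For an integer m ≥ 1 define φ_m := ⌊(m − ⌈m/p⌉)/e⌋, ψ_m := ⌈m/p⌉ + φ_m·e, and ◇_m := 1 if some integer in the half-open interval [ψ_m, m) is congruent to c modulo e, and ◇_m := 0 otherwise. Let λ_w = e·λ_v for an integer λ_v ≥ 1, with p ∤ λ_w, and define ♭ := ⌈♮ − (p−1)λ_w/p⌉ if λ_w < p(♮−1)/(p−1), and ♭ := 1 otherwise. Then the integer b̲ := φ_♮ + ◇_♮ − φ_♭ − ◇_♭ satisfies 0 ≤ b̲ ≤ n_v; moreover, if ♭ = 1 then b̲ = n_v, and if λ_v ≥ p/(p−1) (equivalently λ_v ≥ 2, since λ_v is an integer and p ≥ 2) then b̲ ≥ 1. -/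

import Mathlib

/-- `⌈m/p⌉` for natural numbers. -/
def cld (p m : ℕ) : ℕ := (m + p - 1) / p

/-- `φ_m = ⌊(m - ⌈m/p⌉)/e⌋`. -/
def phiInv (p e m : ℕ) : ℕ := (m - cld p m) / e

/-- `ψ_m = ⌈m/p⌉ + φ_m·e`. -/
def psiInv (p e m : ℕ) : ℕ := cld p m + phiInv p e m * e

open Classical in
/-- `◇_m`: `1` if some integer in `[ψ_m, m)` is congruent to `c` modulo `e`, else `0`. -/
noncomputable def diamInv (p e c m : ℕ) : ℕ :=
  if ∃ j : ℕ, psiInv p e m ≤ j ∧ j < m ∧ j % e = c % e then 1 else 0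

open Classical in
/-- `♭ = ⌈♮ - (p-1)λ_w/p⌉` if `λ_w < p(♮-1)/(p-1)`, and `♭ = 1` otherwise. -/
noncomputable def flatInv (p lw nat : ℕ) : ℕ :=
  if (lw : ℚ) < (p : ℚ) * ((nat : ℚ) - 1) / ((p : ℚ) - 1) then
    (⌈(nat : ℚ) - ((p : ℚ) - 1) * (lw : ℚ) / (p : ℚ)⌉).toNat
  else 1

open Finset

private lemma cnt_card (e v a b : ℕ) (he : 0 < e) :
    (#{x ∈ Ico a b | x % e = v % e} : ℤ) = max (⌈((b:ℚ) - v)/e⌉ - ⌈((a:ℚ) - v)/e⌉) 0 := by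
  have h := Nat.Ico_filter_modEq_card a b he v
  convert h using 3
  ext x
  rw [Finset.mem_filter, Finset.mem_filter]
  rfl

private lemma ceil_shift (e v a k : ℕ) (he : 0 < e) :
    ⌈(((a + k*e : ℕ):ℚ) - v)/e⌉ = ⌈((a:ℚ) - v)/e⌉ + k := by
  have he' : (e:ℚ) ≠ 0 := by positivity
  have h2 : (((a + k*e : ℕ):ℚ) - v)/e = ((a:ℚ)-v)/e + (k:ℤ) := by
    push_cast; field_simp; ring
  rw [h2, Int.ceil_add_intCast]

private lemma cnt_shift (e v a k : ℕ) (he : 0 < e) :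
    #{x ∈ Ico a (a + k*e) | x % e = v % e} = k := by
  have h := cnt_card e v a (a + k*e) he
  rw [ceil_shift e v a k he] at h
  have : (#{x ∈ Ico a (a + k*e) | x % e = v % e} : ℤ) = k := by rw [h]; omega
  exact_mod_cast this

private lemma cnt_le (e v a b K : ℕ) (he : 0 < e) (h : b ≤ a + K*e) :
    #{x ∈ Ico a b | x % e = v % e} ≤ K := by
  have h1 := cnt_card e v a b he
  have he' : (0:ℚ) < e := by positivity
  have h2 : ((b:ℚ) - v)/e ≤ (((a + K*e : ℕ):ℚ) - v)/e := by
    gcongr ((?_ : ℚ) - _)/_; exact_mod_cast h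
  have h3 : ⌈((b:ℚ) - v)/e⌉ ≤ ⌈((a:ℚ) - v)/e⌉ + K := by
    calc ⌈((b:ℚ) - v)/e⌉ ≤ ⌈(((a + K*e : ℕ):ℚ) - v)/e⌉ := Int.ceil_le_ceil h2
    _ = ⌈((a:ℚ) - v)/e⌉ + K := ceil_shift e v a K he
  have : (#{x ∈ Ico a b | x % e = v % e} : ℤ) ≤ K := by rw [h1]; omega
  exact_mod_cast this

private lemma cld_le (p m : ℕ) (hp : 1 ≤ p) : cld p m ≤ m := by
  unfold cld
  rcases Nat.eq_zero_or_pos m with h | h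
  · subst h
    have h0 : 0 + p - 1 = p - 1 := by omega
    rw [h0, Nat.div_eq_of_lt (by omega)]
  · have h1 : m + p - 1 ≤ m * p := by
      zify [show 1 ≤ m + p by omega]
      nlinarith [mul_nonneg (sub_nonneg.2 (show (1:ℤ) ≤ m by exact_mod_cast h))
        (sub_nonneg.2 (show (1:ℤ) ≤ p by exact_mod_cast hp))]
    calc (m + p - 1) / p ≤ m * p / p := Nat.div_le_div_right h1
    _ = m := Nat.mul_div_cancel (m := m) (by omega)

private lemma le_mul_cld (p m : ℕ) (hp : 1 ≤ p) : m ≤ p * cld p m := by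
  unfold cld
  have h1 : p * ((m + p - 1) / p) + (m + p - 1) % p = m + p - 1 := Nat.div_add_mod _ _
  have h2 : (m + p - 1) % p < p := Nat.mod_lt _ (by omega)
  omega

private lemma cld_mul (p c : ℕ) (hp : 2 ≤ p) : cld p (p * c) = c := by
  unfold cld
  have h0 : p * c + p - 1 = p * c + (p - 1) := by omega
  rw [h0, Nat.add_div_of_dvd_right ⟨c, rfl⟩, Nat.mul_div_cancel_left c (by omega),
    Nat.div_eq_of_lt (by omega)]
  omega

private lemma cld_one (p : ℕ) (hp : 1 ≤ p) : cld p 1 = 1 := by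
  unfold cld
  have h0 : 1 + p - 1 = p := by omega
  rw [h0, Nat.div_self (by omega)]

private lemma F_eq_cnt (p e c m : ℕ) (hp : 1 ≤ p) (he : 0 < e) :
    phiInv p e m + diamInv p e c m = #{x ∈ Ico (cld p m) m | x % e = c % e} := by
  set a := cld p m with ha
  have ham : a ≤ m := cld_le p m hp
  set φ := phiInv p e m with hφ
  have hψm : a + φ * e ≤ m := by
    have h1 : φ * e ≤ m - a := by
      rw [hφ]; unfold phiInv; rw [← ha]; exact Nat.div_mul_le_self _ _
    omega
  have hlt : m < a + φ * e + e := by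
    have h2 : m - a < (φ + 1) * e := by
      apply (Nat.div_lt_iff_lt_mul he).1
      rw [hφ]; unfold phiInv; rw [← ha]; omega
    have h3 : (φ + 1) * e = φ * e + e := by ring
    omega
  have hsplit : Ico a m = Ico a (a + φ * e) ∪ Ico (a + φ * e) m :=
    (Finset.Ico_union_Ico_eq_Ico (by omega) hψm).symm
  have hdisj : Disjoint (Ico a (a + φ * e)) (Ico (a + φ * e) m) :=
    Finset.Ico_disjoint_Ico_consecutive a _ m
  have hcard : #{x ∈ Ico a m | x % e = c % e}
      = #{x ∈ Ico a (a + φ * e) | x % e = c % e} + #{x ∈ Ico (a + φ * e) m | x % e = c % e} := by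
    rw [hsplit, filter_union, card_union_of_disjoint (Finset.disjoint_filter_filter hdisj)]
  have h1 : #{x ∈ Ico a (a + φ * e) | x % e = c % e} = φ := cnt_shift e c a φ he
  have h2 : #{x ∈ Ico (a + φ * e) m | x % e = c % e} = diamInv p e c m := by
    have hpsi : psiInv p e m = a + φ * e := rfl
    unfold diamInv
    rw [hpsi]
    split_ifs with h
    · obtain ⟨j, hj1, hj2, hj3⟩ := h
      have hmem : j ∈ {x ∈ Ico (a + φ * e) m | x % e = c % e} := by
        simp only [mem_filter, mem_Ico]; exact ⟨⟨hj1, hj2⟩, hj3⟩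
      have hge : 1 ≤ #{x ∈ Ico (a + φ * e) m | x % e = c % e} :=
        Finset.card_pos.2 ⟨j, hmem⟩
      have hle : #{x ∈ Ico (a + φ * e) m | x % e = c % e} ≤ 1 := by
        apply Finset.card_le_one.2
        intro x hx y hy
        simp only [mem_filter, mem_Ico] at hx hy
        obtain ⟨⟨hx1, hx2⟩, hx3⟩ := hx
        obtain ⟨⟨hy1, hy2⟩, hy3⟩ := hy
        rcases le_total x y with hxy | hxy
        · have hdvd : e ∣ y - x := (Nat.modEq_iff_dvd' hxy).1 (hx3.trans hy3.symm)
          have : y - x = 0 := Nat.eq_zero_of_dvd_of_lt hdvd (by omega) |>.symm ▸ rfl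
          omega
        · have hdvd : e ∣ x - y := (Nat.modEq_iff_dvd' hxy).1 (hy3.trans hx3.symm)
          have : x - y = 0 := Nat.eq_zero_of_dvd_of_lt hdvd (by omega) |>.symm ▸ rfl
          omega
      omega
    · push_neg at h
      rw [Finset.card_eq_zero.2]
      rw [Finset.filter_eq_empty_iff]
      intro x hx
      simp only [mem_Ico] at hx
      exact h x hx.1 hx.2
  omega

private lemma floor_nat_div (a b : ℕ) (hb : 0 < b) : ⌊(a:ℚ)/(b:ℚ)⌋ = (a/b : ℕ) := by
  have hb' : (0:ℚ) < b := by positivity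
  rw [Int.floor_eq_iff]
  constructor
  · rw [le_div_iff₀ hb']
    exact_mod_cast Nat.div_mul_le_self a b
  · rw [div_lt_iff₀ hb']
    have h1 : a < (a/b + 1) * b := by
      rw [add_mul, one_mul]
      have h2 := Nat.div_add_mod a b
      have h3 := Nat.mod_lt a hb
      have h4 : b * (a / b) = a / b * b := Nat.mul_comm _ _
      omega
    exact_mod_cast h1

private lemma flat_branch (p lw nt : ℕ) (hp : 2 ≤ p) (hnt : 1 ≤ nt)
    (hcond : (lw : ℚ) < (p : ℚ) * ((nt : ℚ) - 1) / ((p : ℚ) - 1)) :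
    flatInv p lw nt = nt - (p-1)*lw/p ∧ (p-1)*lw/p + 2 ≤ nt := by
  have hp1 : (1:ℚ) ≤ (p:ℚ) := by exact_mod_cast (by omega : 1 ≤ p)
  have hpq : (0:ℚ) < (p:ℚ) - 1 := by
    have : (2:ℚ) ≤ (p:ℚ) := by exact_mod_cast hp
    linarith
  set D := (p-1)*lw/p with hD
  have hnat : (p-1)*lw < p*(nt-1) := by
    rw [lt_div_iff₀ hpq] at hcond
    qify [show 1 ≤ p by omega, hnt]
    linarith
  have hD1 : p * D ≤ (p-1)*lw := by
    rw [hD, mul_comm]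
    exact Nat.div_mul_le_self _ _
  have hD2 : D + 2 ≤ nt := by
    have h5 : p * D < p * (nt - 1) := lt_of_le_of_lt hD1 hnat
    have hlt : D < nt - 1 := Nat.lt_of_mul_lt_mul_left h5
    omega
  refine ⟨?_, hD2⟩
  unfold flatInv
  rw [if_pos hcond]
  have hfl : ((p:ℚ) - 1) * lw / p = (((p-1)*lw : ℕ):ℚ) / (p:ℕ) := by
    push_cast [Nat.cast_sub (by omega : 1 ≤ p)]
    ring
  have hceil : ⌈(nt : ℚ) - ((p:ℚ)-1)*lw/p⌉ = (nt:ℤ) - D := by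
    rw [hfl]
    have h1 : (nt:ℚ) - (((p-1)*lw : ℕ):ℚ)/(p:ℕ) = -((((p-1)*lw : ℕ):ℚ)/(p:ℕ)) + ((nt:ℤ):ℚ) := by
      push_cast; ring
    rw [h1, Int.ceil_add_intCast, Int.ceil_neg, floor_nat_div _ _ (by omega)]
    omega
  rw [hceil]
  exact Int.toNat_sub nt D

private lemma key_ineq (q e lw D : ℕ) (hq : 1 ≤ q) (he : 1 ≤ e) (hee : e ≤ q)
    (hlw : 2*e ≤ lw) (hD2 : q*lw < (q+1)*D + (q+1)) : (q+1)*e ≤ q*D + q := by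
  rcases Nat.lt_or_ge q 2 with h | h
  · have hq1 : q = 1 := by omega
    have he1 : e = 1 := by omega
    subst hq1; subst he1
    omega
  · have c1 : (q:ℤ)*lw ≤ ((q:ℤ)+1)*D + q := by
      have : q*lw ≤ (q+1)*D + q := by omega
      exact_mod_cast this
    have c2 : (2:ℤ)*e ≤ lw := by exact_mod_cast hlw
    have c3 : (2:ℤ) ≤ (q:ℤ) := by exact_mod_cast h
    have c4 : (1:ℤ) ≤ (e:ℤ) := by exact_mod_cast he
    have c5 : (e:ℤ) ≤ (q:ℤ) := by exact_mod_cast hee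
    have key : ((q:ℤ)+1)*(((q:ℤ)+1)*e) ≤ ((q:ℤ)+1)*((q:ℤ)*D + q) := by
      nlinarith [mul_nonneg (by linarith : (0:ℤ) ≤ (q:ℤ))
          (by linarith : (0:ℤ) ≤ ((q:ℤ)+1)*D + q - q*lw),
        mul_nonneg (mul_nonneg (by linarith : (0:ℤ) ≤ (q:ℤ)) (by linarith : (0:ℤ) ≤ (q:ℤ)))
          (by linarith : (0:ℤ) ≤ (lw:ℤ) - 2*e),
        mul_nonneg (by linarith : (0:ℤ) ≤ (e:ℤ)) (sq_nonneg ((q:ℤ)-2)),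
        mul_nonneg (by linarith : (0:ℤ) ≤ (e:ℤ)) (by linarith : (0:ℤ) ≤ (q:ℤ)-2),
        (by linarith : (0:ℤ) ≤ (q:ℤ)-(e:ℤ))]
    have h6 := le_of_mul_le_mul_left key (by positivity : (0:ℤ) < (q:ℤ)+1)
    exact_mod_cast h6

set_option maxHeartbeats 1000000 in
theorem stmt10 (p e nv lv : ℕ) (hp : p.Prime) (he : 1 ≤ e) (hnv : 1 ≤ nv)
    (hed : e ∣ p - 1) (hdvd : (p - 1) ∣ e * nv) (hlv : 1 ≤ lv)
    (hplw : ¬ p ∣ e * lv) :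
    0 ≤ ((phiInv p e (p * (e * nv) / (p - 1)) : ℤ) +
          diamInv p e ((e * nv) / (p - 1)) (p * (e * nv) / (p - 1)) -
          phiInv p e (flatInv p (e * lv) (p * (e * nv) / (p - 1))) -
          diamInv p e ((e * nv) / (p - 1))
            (flatInv p (e * lv) (p * (e * nv) / (p - 1)))) ∧
    ((phiInv p e (p * (e * nv) / (p - 1)) : ℤ) +
          diamInv p e ((e * nv) / (p - 1)) (p * (e * nv) / (p - 1)) -
          phiInv p e (flatInv p (e * lv) (p * (e * nv) / (p - 1))) -
          diamInv p e ((e * nv) / (p - 1))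
            (flatInv p (e * lv) (p * (e * nv) / (p - 1)))) ≤ (nv : ℤ) ∧
    (flatInv p (e * lv) (p * (e * nv) / (p - 1)) = 1 →
      ((phiInv p e (p * (e * nv) / (p - 1)) : ℤ) +
          diamInv p e ((e * nv) / (p - 1)) (p * (e * nv) / (p - 1)) -
          phiInv p e (flatInv p (e * lv) (p * (e * nv) / (p - 1))) -
          diamInv p e ((e * nv) / (p - 1))
            (flatInv p (e * lv) (p * (e * nv) / (p - 1)))) = (nv : ℤ)) ∧
    ((p : ℚ) / ((p : ℚ) - 1) ≤ (lv : ℚ) →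
      1 ≤ ((phiInv p e (p * (e * nv) / (p - 1)) : ℤ) +
          diamInv p e ((e * nv) / (p - 1)) (p * (e * nv) / (p - 1)) -
          phiInv p e (flatInv p (e * lv) (p * (e * nv) / (p - 1))) -
          diamInv p e ((e * nv) / (p - 1))
            (flatInv p (e * lv) (p * (e * nv) / (p - 1))))) := by
  have hp2 := hp.two_le
  obtain ⟨q, hqdef⟩ : ∃ q, p = q + 1 := ⟨p - 1, by omega⟩
  have hq1 : 1 ≤ q := by omega
  have hpq : p - 1 = q := by omega
  rw [hpq] at hed hdvd
  obtain ⟨c, hc⟩ := hdvd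
  have he0 : 0 < e := he
  have hc1 : 1 ≤ c := by
    rcases Nat.eq_zero_or_pos c with h | h
    · rw [h, Nat.mul_zero] at hc
      have := Nat.mul_pos he0 hnv
      omega
    · exact h
  have hee : e ≤ q := Nat.le_of_dvd (by omega) hed
  have hcd : (e*nv)/(p-1) = c := by
    rw [hpq, hc, Nat.mul_div_cancel_left c (by omega)]
  have hnat : p*(e*nv)/(p-1) = p*c := by
    rw [hpq, hc, show p * (q*c) = q * (p*c) by ring, Nat.mul_div_cancel_left _ (by omega)]
  rw [hnat, hcd]
  set B := flatInv p (e*lv) (p*c) with hBdef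
  clear_value B
  have hpc1 : 1 ≤ p * c := by
    have := Nat.mul_pos (show 0 < p by omega) hc1
    omega
  have hpc : p * c = c + nv * e := by
    rw [hqdef, add_mul, one_mul, ← hc]; ring
  -- value at ♮
  have hFnat : phiInv p e (p*c) + diamInv p e c (p*c) = nv := by
    rw [F_eq_cnt p e c (p*c) (by omega) he0, cld_mul p c hp2, hpc]
    exact cnt_shift e c c nv he0
  -- cast facts
  have hpz : (p:ℤ) = (q:ℤ)+1 := by rw [hqdef]; push_cast; ring
  have hcldB : (B:ℤ) ≤ ((q:ℤ)+1) * (cld p B) := by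
    have h1 : B ≤ p * cld p B := le_mul_cld p B (by omega)
    have h2 : (B:ℤ) ≤ (p:ℤ) * (cld p B) := by exact_mod_cast h1
    rw [hpz] at h2; exact h2
  have hqc : ((q:ℤ))*c = (e:ℤ)*nv := by exact_mod_cast hc.symm
  -- branch analysis
  have hBfacts : 1 ≤ B ∧ B ≤ cld p B + nv*e ∧ (2 ≤ lv → B ≤ cld p B + (nv-1)*e) := by
    by_cases hcond : ((e*lv : ℕ) : ℚ) < (p:ℚ) * (((p*c : ℕ):ℚ) - 1)/((p:ℚ)-1)
    · obtain ⟨hBeq, hD2⟩ := flat_branch p (e*lv) (p*c) hp2 hpc1 hcond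
      rw [← hBdef] at hBeq
      set D := (p-1)*(e*lv)/p with hDdef
      clear_value D
      have hqz : (1:ℤ) ≤ (q:ℤ) := by exact_mod_cast hq1
      have hB1 : 1 ≤ B := by omega
      have hBpc : B ≤ p*c := by omega
      have hBZ : (B:ℤ) = ((q:ℤ)+1)*c - D := by
        have h1 : (B:ℤ) = (p*c : ℕ) - (D:ℕ) := by
          rw [hBeq]; push_cast [Nat.cast_sub (by omega : D ≤ p*c)]; ring
        rw [h1, hqdef]; push_cast; ring
      -- generic bound
      have hbound : B ≤ cld p B + nv*e := by
        have step : ((q:ℤ)+1) * ((B:ℤ) - cld p B) ≤ (q:ℤ) * B := by linarith [hcldB]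
        have step2 : (q:ℤ) * B ≤ ((q:ℤ)+1)*((e:ℤ)*nv) := by
          have h2 : (q:ℤ)*(B:ℤ) = ((q:ℤ)+1)*((q:ℤ)*c) - (q:ℤ)*D := by rw [hBZ]; ring
          have h3 : ((q:ℤ)+1)*((q:ℤ)*c) = ((q:ℤ)+1)*((e:ℤ)*nv) := by rw [hqc]
          have h4 : (0:ℤ) ≤ (q:ℤ)*D := by positivity
          linarith
        have step3 : ((q:ℤ)+1) * ((B:ℤ) - cld p B - (e:ℤ)*nv) ≤ 0 := by linarith
        have step4 : (B:ℤ) - cld p B - (e:ℤ)*nv ≤ 0 := by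
          by_contra hcon
          push_neg at hcon
          nlinarith [hqz, step3, hcon]
        have : (B:ℤ) ≤ cld p B + nv*e := by linarith
        exact_mod_cast this
      refine ⟨hB1, hbound, fun h2lv => ?_⟩
      -- sharp bound
      have hDmod : q*(e*lv) < (q+1)*D + (q+1) := by
        have hX : D = (q*(e*lv))/(q+1) := by rw [hDdef, hpq, hqdef]
        have h1 : (q+1) * D + (q*(e*lv)) % (q+1) = q*(e*lv) := by
          rw [hX]; exact Nat.div_add_mod _ _
        have h2 : (q*(e*lv)) % (q+1) < q+1 := Nat.mod_lt _ (by omega)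
        omega
      have hlw2 : 2*e ≤ e*lv := by
        calc 2*e = e*2 := by ring
        _ ≤ e*lv := Nat.mul_le_mul_left e h2lv
      have hKey : ((q:ℤ)+1)*e ≤ (q:ℤ)*D + q := by
        exact_mod_cast key_ineq q e (e*lv) D hq1 he hee hlw2 hDmod
      have step : ((q:ℤ)+1) * ((B:ℤ) - cld p B) ≤ (q:ℤ) * B := by linarith [hcldB]
      have step2 : (q:ℤ) * B ≤ ((q:ℤ)+1)*((e:ℤ)*((nv:ℤ)-1)) + q := by
        have h2 : (q:ℤ)*(B:ℤ) = ((q:ℤ)+1)*((q:ℤ)*c) - (q:ℤ)*D := by rw [hBZ]; ring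
        have h3 : ((q:ℤ)+1)*((q:ℤ)*c) = ((q:ℤ)+1)*((e:ℤ)*nv) := by rw [hqc]
        nlinarith [hKey]
      have step3 : ((q:ℤ)+1) * ((B:ℤ) - cld p B - (e:ℤ)*((nv:ℤ)-1)) ≤ q := by linarith
      have step4 : (B:ℤ) - cld p B - (e:ℤ)*((nv:ℤ)-1) ≤ 0 := by
        by_contra hcon
        push_neg at hcon
        nlinarith [hqz, step3, hcon]
      have h5 : (B:ℤ) ≤ cld p B + ((nv:ℤ)-1)*e := by linarith
      have h6 : (B:ℤ) ≤ cld p B + ((nv-1 : ℕ):ℤ)*e := by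
        push_cast [Nat.cast_sub hnv]
        linarith
      exact_mod_cast h6
    · have hBval : B = 1 := by rw [hBdef]; unfold flatInv; rw [if_neg hcond]
      have hcld1 : cld p B = 1 := by rw [hBval]; exact cld_one p (by omega)
      exact ⟨by omega, by omega, fun _ => by omega⟩
  obtain ⟨hB1, hBnd, hBnd4⟩ := hBfacts
  -- value at ♭
  have hFB : phiInv p e B + diamInv p e c B = #{x ∈ Ico (cld p B) B | x % e = c % e} :=
    F_eq_cnt p e c B (by omega) he0
  have hKle : #{x ∈ Ico (cld p B) B | x % e = c % e} ≤ nv :=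
    cnt_le e c (cld p B) B nv he0 hBnd
  have hKone : B = 1 → #{x ∈ Ico (cld p B) B | x % e = c % e} = 0 := by
    intro h1
    rw [h1, cld_one p (by omega)]
    simp
  refine ⟨?_, ?_, ?_, ?_⟩
  · omega
  · omega
  · intro h1
    have := hKone h1
    omega
  · intro hyp
    have h2lv : 2 ≤ lv := by
      by_contra hcon
      have hlv1 : lv = 1 := by omega
      rw [hlv1] at hyp
      have hpq' : (0:ℚ) < (p:ℚ) - 1 := by
        have : (2:ℚ) ≤ (p:ℚ) := by exact_mod_cast hp2
        linarith
      rw [div_le_iff₀ hpq'] at hyp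
      push_cast at hyp
      linarith
    have hKle4 : #{x ∈ Ico (cld p B) B | x % e = c % e} ≤ nv - 1 :=
      cnt_le e c (cld p B) B (nv-1) he0 (hBnd4 h2lv)
    omega
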